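/- Let C be a locally small category with all small colimits such that the full subcategory C^ω of compact (ℵ₀-presentable) objects is essentially small and every object of C is the colimit of a small filtered diagram with values in C^ω. Let τ be an uncountable regular cardinal. Then an object of C is τ-presentable if and only if it is a retract of the colimit of a τ-small filtered diagram with values in C^ω. -/

import Mathlib

universe w v u u'

open CategoryTheory Limits Opposite

/-- A small category `J` is `κ`-filtered if every diagram in it indexed by a category with
fewer than `κ` objects and fewer than `κ` arrows admits a cocone. -/
def IsCardFiltered (J : Type w) [SmallCategory J] (κ : Cardinal.{w}) : Prop :=
  ∀ (A : Type w) [SmallCategory A], ∀ (F : A ⥤ J),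
    Cardinal.mk A < κ → Cardinal.mk (Arrow A) < κ → Nonempty (Limits.Cocone F)

/-- An object `X` of a locally small category `C` is `κ`-presentable if the functor
`Hom(X, -) : C ⥤ Type` preserves colimits of (small) `κ`-filtered diagrams. -/
def IsCardPresentable {C : Type u} [Category.{v} C] (κ : Cardinal.{v}) (X : C) : Prop :=
  ∀ (J : Type v) [SmallCategory J], IsCardFiltered J κ →
    PreservesColimitsOfShape J (coyoneda.obj (op X))


/-- A small filtered diagram in `C` with values in compact (`ℵ₀`-presentable) objects. -/
structure CompactFilteredDiagram (C : Type u) [Category.{v} C] where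
  /-- the indexing category -/
  J : Type v
  /-- the category structure on `J` -/
  [instJ : SmallCategory J]
  /-- the indexing category is filtered -/
  filtered : IsFiltered J
  /-- the diagram -/
  F : J ⥤ C
  /-- the diagram takes values in compact objects -/
  compact : ∀ j, IsCardPresentable Cardinal.aleph0 (F.obj j)

attribute [instance] CompactFilteredDiagram.instJ

section Helpers

variable {J : Type w} [SmallCategory J]

/-- Arrows of a category as a sigma type. -/
def arrowEquivSigma (J : Type w) [SmallCategory J] : Arrow J ≃ Σ x y : J, x ⟶ y where
  toFun a := ⟨a.left, a.right, a.hom⟩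
  invFun p := Arrow.mk p.2.2
  left_inv a := rfl
  right_inv p := rfl

lemma mk_arrow_eq (J : Type w) [SmallCategory J] :
    Cardinal.mk (Arrow J) = Cardinal.mk (Σ x y : J, x ⟶ y) :=
  Cardinal.mk_congr (arrowEquivSigma J)

/-- In a thin category, there are at most as many arrows as pairs of objects. -/
lemma mk_arrow_le_of_thin (J : Type w) [SmallCategory J]
    [∀ x y : J, Subsingleton (x ⟶ y)] :
    Cardinal.mk (Arrow J) ≤ Cardinal.mk J * Cardinal.mk J := by
  rw [mk_arrow_eq]
  have : Cardinal.mk J * Cardinal.mk J = Cardinal.mk (J × J) := by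
    simp [Cardinal.mk_prod]
  rw [this]
  refine Cardinal.mk_le_of_injective (f := fun p => (p.1, p.2.1)) ?_
  rintro ⟨x, y, f⟩ ⟨x', y', f'⟩ h
  simp only [Prod.mk.injEq] at h
  obtain ⟨rfl, rfl⟩ := h
  simp [Subsingleton.elim f f']

end Helpers

section Fan

variable (ι : Type w)

/-- The fan category: objects `Option ι`, with two arrows `some i ⟶ none` for each `i`. -/
def FanCat := Option ι

inductive FanHom : Option ι → Option ι → Type w
  | id : (x : Option ι) → FanHom x x
  | fst : (i : ι) → FanHom (some i) none
  | snd : (i : ι) → FanHom (some i) none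

instance : SmallCategory (FanCat ι) where
  Hom x y := FanHom ι x y
  id x := FanHom.id x
  comp {x y z} f g :=
    match f, g with
    | .id _, g => g
    | .fst i, .id _ => .fst i
    | .snd i, .id _ => .snd i
  id_comp f := rfl
  comp_id f := by cases f <;> rfl
  assoc f g h := by cases f <;> cases g <;> cases h <;> rfl

lemma FanCat.mk_obj : Cardinal.mk (FanCat ι) = Cardinal.mk ι + 1 := by
  simpa [FanCat] using Cardinal.mk_option

lemma FanCat.mk_arrow_le :
    Cardinal.mk (Arrow (FanCat ι)) ≤ (Cardinal.mk ι + 1) + (Cardinal.mk ι + Cardinal.mk ι) := by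
  rw [mk_arrow_eq]
  have : Cardinal.mk (Option ι ⊕ ι ⊕ ι) = (Cardinal.mk ι + 1) + (Cardinal.mk ι + Cardinal.mk ι) := by
    simp [Cardinal.mk_option]
  rw [← this]
  refine Cardinal.mk_le_of_injective (f := fun p =>
    match p with
    | ⟨_, _, .id x⟩ => Sum.inl x
    | ⟨_, _, .fst i⟩ => Sum.inr (Sum.inl i)
    | ⟨_, _, .snd i⟩ => Sum.inr (Sum.inr i)) ?_
  rintro ⟨x, y, f⟩ ⟨x', y', f'⟩ h
  change FanHom ι x y at f
  change FanHom ι x' y' at f'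
  cases f <;> cases f' <;> simp_all <;> (cases h; simp)

/-- Build a functor out of the fan category. -/
def FanCat.functor {K : Type w} [SmallCategory K] (x : ι → K) (k0 : K)
    (f g : ∀ i, x i ⟶ k0) : FanCat ι ⥤ K where
  obj o := Option.elim o k0 x
  map {a b} h :=
    match h with
    | .id _ => 𝟙 _
    | .fst i => f i
    | .snd i => g i
  map_id _ := rfl
  map_comp {a b c} h h' := by
    change FanHom ι a b at h
    change FanHom ι b c at h'
    cases h <;> cases h' <;> simp <;> rfl

end Fan

section CardFiltered

variable {K : Type w} [SmallCategory K] {τ : Cardinal.{w}} (hτ : τ.IsRegular)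
  (hτ' : Cardinal.aleph0 < τ) (hK : IsCardFiltered K τ)

include hτ' hK

lemma IsCardFiltered.exists_cocone_family {ι : Type w} (hι : Cardinal.mk ι < τ) (x : ι → K) :
    ∃ (k : K), Nonempty (∀ i, x i ⟶ k) := by
  obtain ⟨c⟩ := hK (Discrete ι) (Discrete.functor x)
    (by rwa [Cardinal.mk_congr (discreteEquiv (α := ι))])
    (by
      refine lt_of_le_of_lt (mk_arrow_le_of_thin _) ?_
      rw [Cardinal.mk_congr (discreteEquiv (α := ι))]
      exact Cardinal.mul_lt_of_lt hτ'.le hι hι)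
  exact ⟨c.pt, ⟨fun i => c.ι.app ⟨i⟩⟩⟩

lemma IsCardFiltered.exists_coeq_family {ι : Type w} (hι : Cardinal.mk ι < τ)
    (x : ι → K) (k0 : K) (f g : ∀ i, x i ⟶ k0) :
    ∃ (k1 : K) (h : k0 ⟶ k1), ∀ i, f i ≫ h = g i ≫ h := by
  have h1 : (1 : Cardinal.{w}) < τ := lt_trans Cardinal.one_lt_aleph0 hτ'
  obtain ⟨c⟩ := hK (FanCat ι) (FanCat.functor ι x k0 f g)
    (by rw [FanCat.mk_obj]; exact Cardinal.add_lt_of_lt hτ'.le hι h1)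
    (by
      refine lt_of_le_of_lt (FanCat.mk_arrow_le ι) ?_
      exact Cardinal.add_lt_of_lt hτ'.le (Cardinal.add_lt_of_lt hτ'.le hι h1)
        (Cardinal.add_lt_of_lt hτ'.le hι hι))
  refine ⟨c.pt, c.ι.app none, fun i => ?_⟩
  have h1 := c.ι.naturality (X := some i) (Y := none) (FanHom.fst i)
  have h2 := c.ι.naturality (X := some i) (Y := none) (FanHom.snd i)
  exact h1.trans h2.symm

lemma IsCardFiltered.isFiltered : IsFiltered K := by
  have ne : Nonempty K := by
    obtain ⟨c⟩ := hK (Discrete PEmpty) (Functor.empty K)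
      (by
        rw [Cardinal.mk_congr (discreteEquiv (α := PEmpty)), Cardinal.mk_eq_zero PEmpty]
        exact lt_trans Cardinal.aleph0_pos hτ')
      (by
        refine lt_of_le_of_lt (mk_arrow_le_of_thin _) ?_
        have : Cardinal.mk (Discrete PEmpty.{w+1}) = 0 := by
          simp [Cardinal.mk_congr (discreteEquiv (α := PEmpty))]
        rw [this, mul_zero]
        exact lt_trans Cardinal.aleph0_pos hτ')
    exact ⟨c.pt⟩
  have : IsFilteredOrEmpty K := by
    constructor
    · intro x y
      obtain ⟨k, ⟨m⟩⟩ := IsCardFiltered.exists_cocone_family hτ' hK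
        (ι := ULift Bool) (by simpa using lt_trans (Cardinal.nat_lt_aleph0 2) hτ')
        (fun b => if b.down then x else y)
      exact ⟨k, m ⟨true⟩, m ⟨false⟩, trivial⟩
    · intro x y f g
      obtain ⟨k, h, hfg⟩ := IsCardFiltered.exists_coeq_family hτ' hK
        (ι := PUnit) (by rw [Cardinal.mk_punit]; exact lt_trans Cardinal.one_lt_aleph0 hτ') (fun _ => x) y
        (fun _ => f) (fun _ => g)
      exact ⟨k, h, hfg ⟨⟩⟩
  exact ⟨⟩

end CardFiltered

section PresentCrit

variable {C : Type u} [Category.{v} C] [HasColimitsOfSize.{v, v} C] {J : Type v} [SmallCategory J]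

/-- Factor a map to a colimit through a stage, given preservation. -/
lemma coyoneda_exists_factor {X : C} (hp : PreservesColimitsOfShape J (coyoneda.obj (op X)))
    {G : J ⥤ C} (c : Cocone G) (hc : IsColimit c) (f : X ⟶ c.pt) :
    ∃ (j : J) (g : X ⟶ G.obj j), g ≫ c.ι.app j = f := by
  haveI := hp
  obtain ⟨j, g, hg⟩ := Types.jointly_surjective (G ⋙ coyoneda.obj (op X))
    (isColimitOfPreserves (coyoneda.obj (op X)) hc) f
  exact ⟨j, g, hg⟩

lemma coyoneda_exists_eq [IsFiltered J] {X : C} (hp : PreservesColimitsOfShape J (coyoneda.obj (op X)))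
    {G : J ⥤ C} (c : Cocone G) (hc : IsColimit c) {j : J} (p q : X ⟶ G.obj j)
    (h : p ≫ c.ι.app j = q ≫ c.ι.app j) :
    ∃ (j' : J) (e : j ⟶ j'), p ≫ G.map e = q ≫ G.map e := by
  haveI := hp
  have h' : ((coyoneda.obj (op X)).mapCocone c).ι.app j p
      = ((coyoneda.obj (op X)).mapCocone c).ι.app j q := h
  obtain ⟨k, f, g, hfg⟩ := (Types.FilteredColimit.isColimit_eq_iff
    (G ⋙ coyoneda.obj (op X)) (isColimitOfPreserves (coyoneda.obj (op X)) hc)).mp h'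
  refine ⟨IsFiltered.coeq f g, f ≫ IsFiltered.coeqHom f g, ?_⟩
  have hfg' : p ≫ G.map f = q ≫ G.map g := hfg
  calc p ≫ G.map (f ≫ IsFiltered.coeqHom f g)
      = (p ≫ G.map f) ≫ G.map (IsFiltered.coeqHom f g) := by simp
    _ = (q ≫ G.map g) ≫ G.map (IsFiltered.coeqHom f g) := by rw [hfg']
    _ = q ≫ G.map (g ≫ IsFiltered.coeqHom f g) := by simp
    _ = q ≫ G.map (f ≫ IsFiltered.coeqHom f g) := by rw [← IsFiltered.coeq_condition]

/-- Criterion for `Hom(X, -)` to preserve colimits of a filtered shape. -/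
lemma preservesColimitsOfShape_coyoneda_of [IsFiltered J] {X : C}
    (h1 : ∀ (G : J ⥤ C) (f : X ⟶ colimit G), ∃ (j : J) (g : X ⟶ G.obj j),
      g ≫ colimit.ι G j = f)
    (h2 : ∀ (G : J ⥤ C) (j : J) (p q : X ⟶ G.obj j),
      p ≫ colimit.ι G j = q ≫ colimit.ι G j →
      ∃ (j' : J) (e : j ⟶ j'), p ≫ G.map e = q ≫ G.map e) :
    PreservesColimitsOfShape J (coyoneda.obj (op X)) := by
  constructor
  intro G
  apply preservesColimit_of_preserves_colimit_cocone (colimit.isColimit G)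
  apply Types.FilteredColimit.isColimitOf
  · intro f
    obtain ⟨j, g, hg⟩ := h1 G f
    exact ⟨j, g, hg.symm⟩
  · intro i j xi xj hij
    have hij' : (xi ≫ G.map (IsFiltered.leftToMax i j)) ≫ colimit.ι G (IsFiltered.max i j)
        = (xj ≫ G.map (IsFiltered.rightToMax i j)) ≫ colimit.ι G (IsFiltered.max i j) := by
      rw [Category.assoc, Category.assoc, colimit.w, colimit.w]
      exact hij
    obtain ⟨j', e, he⟩ := h2 G (IsFiltered.max i j) _ _ hij'
    refine ⟨j', IsFiltered.leftToMax i j ≫ e, IsFiltered.rightToMax i j ≫ e, ?_⟩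
    have : xi ≫ G.map (IsFiltered.leftToMax i j ≫ e)
        = xj ≫ G.map (IsFiltered.rightToMax i j ≫ e) := by
      rw [G.map_comp, G.map_comp, ← Category.assoc, ← Category.assoc]
      exact he
    exact this

end PresentCrit

section Backward

variable {C : Type u} [Category.{v} C] [HasColimitsOfSize.{v, v} C]
  {τ : Cardinal.{v}} (hτ : τ.IsRegular) (hτ' : Cardinal.aleph0 < τ)

include hτ hτ'

lemma isCardPresentable_of_retract {X Y : C} (i : X ⟶ Y) (r : Y ⟶ X) (hir : i ≫ r = 𝟙 X)
    (hY : IsCardPresentable τ Y) : IsCardPresentable τ X := by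
  intro K _ hK
  haveI : IsFiltered K := IsCardFiltered.isFiltered hτ' hK
  have hYK := hY K hK
  apply preservesColimitsOfShape_coyoneda_of
  · intro G f
    obtain ⟨j, g, hg⟩ := coyoneda_exists_factor hYK (colimit.cocone G) (colimit.isColimit G)
      (r ≫ f)
    refine ⟨j, i ≫ g, ?_⟩
    have hg' : g ≫ colimit.ι G j = r ≫ f := hg
    rw [Category.assoc, hg', ← Category.assoc, hir, Category.id_comp]
  · intro G j p q h
    obtain ⟨j', e, he⟩ := coyoneda_exists_eq hYK (colimit.cocone G) (colimit.isColimit G)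
      (r ≫ p) (r ≫ q) (by simpa using congrArg (fun t => r ≫ t) h)
    refine ⟨j', e, ?_⟩
    have := congrArg (fun t => i ≫ t) ((Category.assoc r p (G.map e)).symm.trans
      (he.trans (Category.assoc r q (G.map e))))
    simpa [← Category.assoc, hir] using this

lemma isCardPresentable_colimit {J : Type v} [SmallCategory J] [IsFiltered J]
    (hJ : Cardinal.mk J < τ) (hA : Cardinal.mk (Arrow J) < τ)
    (F : J ⥤ C) (hF : ∀ j, IsCardPresentable Cardinal.aleph0 (F.obj j)) :
    IsCardPresentable τ (colimit F) := by
  have hAS : Cardinal.mk (Σ x y : J, x ⟶ y) < τ := by rwa [← mk_arrow_eq]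
  intro K _ hK
  haveI : IsFiltered K := IsCardFiltered.isFiltered hτ' hK
  have hKOmega : IsCardFiltered K Cardinal.aleph0 := fun A _ G h1 h2 =>
    hK A G (h1.trans hτ') (h2.trans hτ')
  have hFK : ∀ j : J, PreservesColimitsOfShape K (coyoneda.obj (op (F.obj j))) :=
    fun j => hF j K hKOmega
  apply preservesColimitsOfShape_coyoneda_of
  · -- factorization
    intro G f
    -- pointwise factorizations
    have H1 : ∀ j : J, ∃ (k : K) (g : F.obj j ⟶ G.obj k),
        g ≫ colimit.ι G k = colimit.ι F j ≫ f := fun j =>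
      coyoneda_exists_factor (hFK j) (colimit.cocone G) (colimit.isColimit G) _
    choose k g hg using H1
    -- pointwise compatibilities
    have H2 : ∀ a : Σ x y : J, x ⟶ y, ∃ (ka : K) (u : k a.1 ⟶ ka) (v : k a.2.1 ⟶ ka),
        g a.1 ≫ G.map u = (F.map a.2.2 ≫ g a.2.1) ≫ G.map v := by
      rintro ⟨x, y, b⟩
      have heq : g x ≫ colimit.ι G (k x) = (F.map b ≫ g y) ≫ colimit.ι G (k y) := by
        rw [hg, Category.assoc, hg, ← Category.assoc, colimit.w]
      have h' : ((coyoneda.obj (op (F.obj x))).mapCocone (colimit.cocone G)).ι.app (k x) (g x)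
          = ((coyoneda.obj (op (F.obj x))).mapCocone (colimit.cocone G)).ι.app (k y)
            (F.map b ≫ g y) := heq
      obtain ⟨ka, u, v, huv⟩ := (Types.FilteredColimit.isColimit_eq_iff
        (G ⋙ coyoneda.obj (op (F.obj x)))
        (isColimitOfPreserves (coyoneda.obj (op (F.obj x))) (colimit.isColimit G))).mp h'
      exact ⟨ka, u, v, huv⟩
    choose ka u v huv using H2
    -- a cocone over all these objects
    obtain ⟨k0, ⟨w⟩⟩ := IsCardFiltered.exists_cocone_family hτ' hK
      (ι := J ⊕ (Σ x y : J, x ⟶ y))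
      (by
        have hs : Cardinal.mk (J ⊕ (Σ x y : J, x ⟶ y))
            = Cardinal.mk J + Cardinal.mk (Σ x y : J, x ⟶ y) := by
          simp [Cardinal.mk_sum]
        rw [hs]
        exact Cardinal.add_lt_of_lt hτ'.le hJ hAS)
      (fun s => Sum.elim k ka s)
    -- coequalize
    obtain ⟨k1, h, hh⟩ := IsCardFiltered.exists_coeq_family hτ' hK
      (ι := (Σ x y : J, x ⟶ y) ⊕ (Σ x y : J, x ⟶ y))
      (by
        have hs : Cardinal.mk ((Σ x y : J, x ⟶ y) ⊕ (Σ x y : J, x ⟶ y))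
            = Cardinal.mk (Σ x y : J, x ⟶ y) + Cardinal.mk (Σ x y : J, x ⟶ y) := by
          simp [Cardinal.mk_sum]
        rw [hs]
        exact Cardinal.add_lt_of_lt hτ'.le hAS hAS)
      (fun s => Sum.elim (fun a => k a.1) (fun a => k a.2.1) s) k0
      (fun s => match s with
        | Sum.inl a => u a ≫ w (Sum.inr a)
        | Sum.inr a => v a ≫ w (Sum.inr a))
      (fun s => match s with
        | Sum.inl a => w (Sum.inl a.1)
        | Sum.inr a => w (Sum.inl a.2.1))
    -- build the cocone on F with point G.obj k1
    set m : ∀ j : J, k j ⟶ k1 := fun j => w (Sum.inl j) ≫ h with hm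
    have hcompat : ∀ a : Σ x y : J, x ⟶ y,
        F.map a.2.2 ≫ g a.2.1 ≫ G.map (m a.2.1) = g a.1 ≫ G.map (m a.1) := by
      rintro ⟨x, y, b⟩
      have e1 : (u ⟨x, y, b⟩ ≫ w (Sum.inr ⟨x, y, b⟩)) ≫ h = w (Sum.inl x) ≫ h :=
        hh (Sum.inl ⟨x, y, b⟩)
      have e2 : (v ⟨x, y, b⟩ ≫ w (Sum.inr ⟨x, y, b⟩)) ≫ h = w (Sum.inl y) ≫ h :=
        hh (Sum.inr ⟨x, y, b⟩)
      have hv := huv ⟨x, y, b⟩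
      dsimp at hv e1 e2 ⊢
      calc F.map b ≫ g y ≫ G.map (w (Sum.inl y) ≫ h)
          = F.map b ≫ g y ≫ G.map ((v ⟨x, y, b⟩ ≫ w (Sum.inr ⟨x, y, b⟩)) ≫ h) := by
            rw [e2]
        _ = ((F.map b ≫ g y) ≫ G.map (v ⟨x, y, b⟩)) ≫ G.map (w (Sum.inr ⟨x, y, b⟩) ≫ h) := by
            simp [G.map_comp, G.map_comp (v ⟨x, y, b⟩) (w (Sum.inr ⟨x, y, b⟩)),
              G.map_comp (w (Sum.inr ⟨x, y, b⟩)) h]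
            exact congrArg (fun t : G.obj (ka ⟨x, y, b⟩) ⟶ G.obj k1 =>
              F.map b ≫ g y ≫ G.map (v ⟨x, y, b⟩) ≫ t) (G.map_comp _ _).symm
        _ = (g x ≫ G.map (u ⟨x, y, b⟩)) ≫ G.map (w (Sum.inr ⟨x, y, b⟩) ≫ h) := by rw [← hv]
        _ = g x ≫ G.map ((u ⟨x, y, b⟩ ≫ w (Sum.inr ⟨x, y, b⟩)) ≫ h) := by
            simp [G.map_comp, G.map_comp (u ⟨x, y, b⟩) (w (Sum.inr ⟨x, y, b⟩)),
              G.map_comp (w (Sum.inr ⟨x, y, b⟩)) h]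
            exact congrArg (fun t : G.obj (ka ⟨x, y, b⟩) ⟶ G.obj k1 => g x ≫ G.map (u ⟨x, y, b⟩) ≫ t) (G.map_comp _ _)
        _ = g x ≫ G.map (w (Sum.inl x) ≫ h) := by rw [e1]
    let co : Cocone F := {
      pt := G.obj k1
      ι := {
        app := fun j => g j ≫ G.map (m j)
        naturality := fun x y b => by
          have := hcompat ⟨x, y, b⟩
          dsimp at this ⊢
          rw [Category.comp_id]
          exact this } }
    refine ⟨k1, colimit.desc F co, ?_⟩
    apply colimit.hom_ext
    intro j
    rw [← Category.assoc, colimit.ι_desc]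
    show (g j ≫ G.map (m j)) ≫ colimit.ι G k1 = colimit.ι F j ≫ f
    rw [Category.assoc, colimit.w, hg]
  · -- eventual equality
    intro G k p q hpq
    have H1 : ∀ j : J, ∃ (k' : K) (e : k ⟶ k'),
        (colimit.ι F j ≫ p) ≫ G.map e = (colimit.ι F j ≫ q) ≫ G.map e := by
      intro j
      apply coyoneda_exists_eq (hFK j) (colimit.cocone G) (colimit.isColimit G)
      show (colimit.ι F j ≫ p) ≫ colimit.ι G k = (colimit.ι F j ≫ q) ≫ colimit.ι G k
      rw [Category.assoc, Category.assoc, hpq]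
    choose k' e he using H1
    obtain ⟨k0, ⟨w⟩⟩ := IsCardFiltered.exists_cocone_family hτ' hK (ι := J) hJ k'
    obtain ⟨k1, h, hh⟩ := IsCardFiltered.exists_coeq_family hτ' hK (ι := J × J)
      (by
        have : Cardinal.mk (J × J) = Cardinal.mk J * Cardinal.mk J := by
          simp [Cardinal.mk_prod]
        rw [this]
        exact Cardinal.mul_lt_of_lt hτ'.le hJ hJ)
      (fun _ => k) k0
      (fun s => e s.1 ≫ w s.1) (fun s => e s.2 ≫ w s.2)
    have ne : Nonempty J := IsFiltered.nonempty
    obtain ⟨j0⟩ := ne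
    refine ⟨k1, (e j0 ≫ w j0) ≫ h, ?_⟩
    apply colimit.hom_ext
    intro j
    have hj : (e j ≫ w j) ≫ h = (e j0 ≫ w j0) ≫ h := hh (j, j0)
    rw [← Category.assoc, ← Category.assoc, ← hj]
    calc (colimit.ι F j ≫ p) ≫ G.map ((e j ≫ w j) ≫ h)
        = ((colimit.ι F j ≫ p) ≫ G.map (e j)) ≫ G.map (w j ≫ h) := by simp
      _ = ((colimit.ι F j ≫ q) ≫ G.map (e j)) ≫ G.map (w j ≫ h) := by rw [he]
      _ = (colimit.ι F j ≫ q) ≫ G.map ((e j ≫ w j) ≫ h) := by simp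


end Backward

section SubCatD

variable {J : Type w} [SmallCategory J]

/-- A `τ`-small filtered subcategory datum of `J`. -/
structure SubCatD (J : Type w) [SmallCategory J] (τ : Cardinal.{w}) : Type w where
  O : Set J
  A : Set (Σ x y : J, x ⟶ y)
  src_mem : ∀ e ∈ A, e.1 ∈ O
  tgt_mem : ∀ e ∈ A, e.2.1 ∈ O
  id_mem : ∀ x ∈ O, (⟨x, x, 𝟙 x⟩ : Σ x y : J, x ⟶ y) ∈ A
  comp_mem : ∀ (x y z : J) (f : x ⟶ y) (g : y ⟶ z),
    (⟨x, y, f⟩ : Σ x y : J, x ⟶ y) ∈ A → (⟨y, z, g⟩ : Σ x y : J, x ⟶ y) ∈ A →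
    (⟨x, z, f ≫ g⟩ : Σ x y : J, x ⟶ y) ∈ A
  nonempty : O.Nonempty
  sup : ∀ x ∈ O, ∀ y ∈ O, ∃ z ∈ O, ∃ (f : x ⟶ z) (g : y ⟶ z),
    (⟨x, z, f⟩ : Σ x y : J, x ⟶ y) ∈ A ∧ (⟨y, z, g⟩ : Σ x y : J, x ⟶ y) ∈ A
  coeq : ∀ (x y : J) (f g : x ⟶ y),
    (⟨x, y, f⟩ : Σ x y : J, x ⟶ y) ∈ A → (⟨x, y, g⟩ : Σ x y : J, x ⟶ y) ∈ A →
    ∃ (z : J) (h : y ⟶ z), (⟨y, z, h⟩ : Σ x y : J, x ⟶ y) ∈ A ∧ f ≫ h = g ≫ h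
  cardO : Cardinal.mk O < τ
  cardA : Cardinal.mk A < τ

variable [IsFiltered J] {τ : Cardinal.{w}}

/-- One closure step: objects. -/
def stepO (O : Set J) (A : Set (Σ x y : J, x ⟶ y)) : Set J :=
  (O ∪ ((fun p : J × J => IsFiltered.max p.1 p.2) '' (O ×ˢ O)))
    ∪ ((fun p : Σ x y : J, (x ⟶ y) × (x ⟶ y) => IsFiltered.coeq p.2.2.1 p.2.2.2) ''
        {p | (⟨p.1, p.2.1, p.2.2.1⟩ : Σ x y : J, x ⟶ y) ∈ A ∧
             (⟨p.1, p.2.1, p.2.2.2⟩ : Σ x y : J, x ⟶ y) ∈ A})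

/-- One closure step: arrows. -/
def stepA (O : Set J) (A : Set (Σ x y : J, x ⟶ y)) : Set (Σ x y : J, x ⟶ y) :=
  ((A ∪ ((fun x : J => (⟨x, x, 𝟙 x⟩ : Σ x y : J, x ⟶ y)) '' stepO O A))
    ∪ (((fun q : Σ x y z : J, (x ⟶ y) × (y ⟶ z) =>
          (⟨q.1, q.2.2.1, q.2.2.2.1 ≫ q.2.2.2.2⟩ : Σ x y : J, x ⟶ y)) ''
        {q | (⟨q.1, q.2.1, q.2.2.2.1⟩ : Σ x y : J, x ⟶ y) ∈ A ∧
             (⟨q.2.1, q.2.2.1, q.2.2.2.2⟩ : Σ x y : J, x ⟶ y) ∈ A})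
      ∪ ((fun p : J × J =>
          (⟨p.1, IsFiltered.max p.1 p.2, IsFiltered.leftToMax p.1 p.2⟩ : Σ x y : J, x ⟶ y)) ''
            (O ×ˢ O))))
    ∪ (((fun p : J × J =>
          (⟨p.2, IsFiltered.max p.1 p.2, IsFiltered.rightToMax p.1 p.2⟩ : Σ x y : J, x ⟶ y)) ''
            (O ×ˢ O))
      ∪ ((fun p : Σ x y : J, (x ⟶ y) × (x ⟶ y) =>
          (⟨p.2.1, IsFiltered.coeq p.2.2.1 p.2.2.2,
            IsFiltered.coeqHom p.2.2.1 p.2.2.2⟩ : Σ x y : J, x ⟶ y)) ''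
        {p | (⟨p.1, p.2.1, p.2.2.1⟩ : Σ x y : J, x ⟶ y) ∈ A ∧
             (⟨p.1, p.2.1, p.2.2.2⟩ : Σ x y : J, x ⟶ y) ∈ A}))

lemma subset_stepO (O : Set J) (A : Set (Σ x y : J, x ⟶ y)) : O ⊆ stepO O A :=
  fun x hx => Or.inl (Or.inl hx)

lemma subset_stepA (O : Set J) (A : Set (Σ x y : J, x ⟶ y)) : A ⊆ stepA O A :=
  fun e he => Or.inl (Or.inl (Or.inl he))

lemma stepO_mono {O O' : Set J} {A A' : Set (Σ x y : J, x ⟶ y)}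
    (hO : O ⊆ O') (hA : A ⊆ A') : stepO O A ⊆ stepO O' A' := by
  apply Set.union_subset_union
  · exact Set.union_subset_union hO (Set.image_mono (Set.prod_mono hO hO))
  · exact Set.image_mono (fun p hp => ⟨hA hp.1, hA hp.2⟩)

lemma stepA_mono {O O' : Set J} {A A' : Set (Σ x y : J, x ⟶ y)}
    (hO : O ⊆ O') (hA : A ⊆ A') : stepA O A ⊆ stepA O' A' := by
  apply Set.union_subset_union
  · apply Set.union_subset_union
    · exact Set.union_subset_union hA (Set.image_mono (stepO_mono hO hA))
    · apply Set.union_subset_union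
      · exact Set.image_mono (fun q hq => ⟨hA hq.1, hA hq.2⟩)
      · exact Set.image_mono (Set.prod_mono hO hO)
  · apply Set.union_subset_union
    · exact Set.image_mono (Set.prod_mono hO hO)
    · exact Set.image_mono (fun p hp => ⟨hA hp.1, hA hp.2⟩)

/-- Iterated closure. -/
def iter (O₀ : Set J) (A₀ : Set (Σ x y : J, x ⟶ y)) : ℕ → Set J × Set (Σ x y : J, x ⟶ y)
  | 0 => (O₀, A₀)
  | n + 1 => (stepO (iter O₀ A₀ n).1 (iter O₀ A₀ n).2, stepA (iter O₀ A₀ n).1 (iter O₀ A₀ n).2)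

lemma iter_le_succ (O₀ : Set J) (A₀ : Set (Σ x y : J, x ⟶ y)) (n : ℕ) :
    (iter O₀ A₀ n).1 ⊆ (iter O₀ A₀ (n + 1)).1 ∧ (iter O₀ A₀ n).2 ⊆ (iter O₀ A₀ (n + 1)).2 :=
  ⟨subset_stepO _ _, subset_stepA _ _⟩

lemma iter_mono_n (O₀ : Set J) (A₀ : Set (Σ x y : J, x ⟶ y)) {m n : ℕ} (h : m ≤ n) :
    (iter O₀ A₀ m).1 ⊆ (iter O₀ A₀ n).1 ∧ (iter O₀ A₀ m).2 ⊆ (iter O₀ A₀ n).2 := by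
  induction n with
  | zero => rw [Nat.le_zero] at h; subst h; exact ⟨subset_rfl, subset_rfl⟩
  | succ n ih =>
    rcases Nat.lt_or_ge m (n + 1) with h' | h'
    · have := ih (Nat.lt_succ_iff.mp h')
      exact ⟨this.1.trans (iter_le_succ O₀ A₀ n).1, this.2.trans (iter_le_succ O₀ A₀ n).2⟩
    · have : m = n + 1 := le_antisymm h h'
      subst this; exact ⟨subset_rfl, subset_rfl⟩

lemma iter_mono_sets {O₀ O₁ : Set J} {A₀ A₁ : Set (Σ x y : J, x ⟶ y)}
    (hO : O₀ ⊆ O₁) (hA : A₀ ⊆ A₁) (n : ℕ) :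
    (iter O₀ A₀ n).1 ⊆ (iter O₁ A₁ n).1 ∧ (iter O₀ A₀ n).2 ⊆ (iter O₁ A₁ n).2 := by
  induction n with
  | zero => exact ⟨hO, hA⟩
  | succ n ih => exact ⟨stepO_mono ih.1 ih.2, stepA_mono ih.1 ih.2⟩

/-- The "endpoints belong to the object set" invariant. -/
def OKpair (O : Set J) (A : Set (Σ x y : J, x ⟶ y)) : Prop :=
  ∀ e ∈ A, e.1 ∈ O ∧ e.2.1 ∈ O

lemma okpair_step {O : Set J} {A : Set (Σ x y : J, x ⟶ y)} (h : OKpair O A) :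
    OKpair (stepO O A) (stepA O A) := by
  rintro e (((he | ⟨x, hx, rfl⟩) | (⟨q, hq, rfl⟩ | ⟨p, hp, rfl⟩)) | (⟨p, hp, rfl⟩ | ⟨p, hp, rfl⟩))
  · exact ⟨subset_stepO O A (h e he).1, subset_stepO O A (h e he).2⟩
  · exact ⟨hx, hx⟩
  · exact ⟨subset_stepO O A (h _ hq.1).1, subset_stepO O A (h _ hq.2).2⟩
  · exact ⟨subset_stepO O A hp.1, Or.inl (Or.inr ⟨p, hp, rfl⟩)⟩
  · exact ⟨subset_stepO O A hp.2, Or.inl (Or.inr ⟨p, hp, rfl⟩)⟩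
  · exact ⟨subset_stepO O A (h _ hp.1).2, Or.inr ⟨p, hp, rfl⟩⟩

end SubCatD

section SubClosure

variable {J : Type w} [SmallCategory J] [IsFiltered J] {τ : Cardinal.{w}}

lemma sig_eq {x y x' y' : J} {f : x ⟶ y} {f' : x' ⟶ y'}
    (h : (⟨x, y, f⟩ : Σ x y : J, x ⟶ y) = ⟨x', y', f'⟩) :
    x = x' ∧ y = y' ∧ HEq f f' := by
  cases h; exact ⟨rfl, rfl, .rfl⟩

lemma card_prod_set (O O' : Set J) :
    Cardinal.mk (O ×ˢ O' : Set (J × J)) ≤ Cardinal.mk O * Cardinal.mk O' := by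
  rw [Cardinal.mk_congr (Equiv.Set.prod O O')]
  simp [Cardinal.mk_prod]

lemma card_pp_le (A : Set (Σ x y : J, x ⟶ y)) :
    Cardinal.mk {p : Σ x y : J, (x ⟶ y) × (x ⟶ y) |
      (⟨p.1, p.2.1, p.2.2.1⟩ : Σ x y : J, x ⟶ y) ∈ A ∧
      (⟨p.1, p.2.1, p.2.2.2⟩ : Σ x y : J, x ⟶ y) ∈ A} ≤ Cardinal.mk A * Cardinal.mk A := by
  have : Cardinal.mk A * Cardinal.mk A = Cardinal.mk (A × A) := by simp [Cardinal.mk_prod]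
  rw [this]
  refine Cardinal.mk_le_of_injective (f := fun p =>
    ((⟨⟨p.1.1, p.1.2.1, p.1.2.2.1⟩, p.2.1⟩ : A), (⟨⟨p.1.1, p.1.2.1, p.1.2.2.2⟩, p.2.2⟩ : A))) ?_
  rintro ⟨⟨x, y, f, g⟩, hp⟩ ⟨⟨x', y', f', g'⟩, hq⟩ h
  simp only [Prod.mk.injEq, Subtype.mk.injEq] at h
  obtain ⟨h1, h2⟩ := h
  obtain ⟨rfl, rfl, hf⟩ := sig_eq h1
  obtain ⟨-, -, hg⟩ := sig_eq h2
  cases eq_of_heq hf; cases eq_of_heq hg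
  rfl

lemma card_cp_le (A : Set (Σ x y : J, x ⟶ y)) :
    Cardinal.mk {q : Σ x y z : J, (x ⟶ y) × (y ⟶ z) |
      (⟨q.1, q.2.1, q.2.2.2.1⟩ : Σ x y : J, x ⟶ y) ∈ A ∧
      (⟨q.2.1, q.2.2.1, q.2.2.2.2⟩ : Σ x y : J, x ⟶ y) ∈ A} ≤
      Cardinal.mk A * Cardinal.mk A := by
  have : Cardinal.mk A * Cardinal.mk A = Cardinal.mk (A × A) := by simp [Cardinal.mk_prod]
  rw [this]
  refine Cardinal.mk_le_of_injective (f := fun q =>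
    ((⟨⟨q.1.1, q.1.2.1, q.1.2.2.2.1⟩, q.2.1⟩ : A),
     (⟨⟨q.1.2.1, q.1.2.2.1, q.1.2.2.2.2⟩, q.2.2⟩ : A))) ?_
  rintro ⟨⟨x, y, z, f, g⟩, hp⟩ ⟨⟨x', y', z', f', g'⟩, hq⟩ h
  simp only [Prod.mk.injEq, Subtype.mk.injEq] at h
  obtain ⟨h1, h2⟩ := h
  obtain ⟨rfl, rfl, hf⟩ := sig_eq h1
  obtain ⟨-, rfl, hg⟩ := sig_eq h2
  cases eq_of_heq hf; cases eq_of_heq hg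
  rfl

variable (hτ : τ.IsRegular) (hτ' : Cardinal.aleph0 < τ)

include hτ' in
lemma card_stepO {O : Set J} {A : Set (Σ x y : J, x ⟶ y)}
    (hO : Cardinal.mk O < τ) (hA : Cardinal.mk A < τ) :
    Cardinal.mk (stepO O A) < τ := by
  refine lt_of_le_of_lt ((Cardinal.mk_union_le _ _).trans
    (add_le_add ((Cardinal.mk_union_le _ _).trans
      (add_le_add le_rfl (Cardinal.mk_image_le.trans (card_prod_set O O))))
      (Cardinal.mk_image_le.trans (card_pp_le A)))) ?_
  exact Cardinal.add_lt_of_lt hτ'.le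
    (Cardinal.add_lt_of_lt hτ'.le hO (Cardinal.mul_lt_of_lt hτ'.le hO hO))
    (Cardinal.mul_lt_of_lt hτ'.le hA hA)

include hτ' in
lemma card_stepA {O : Set J} {A : Set (Σ x y : J, x ⟶ y)}
    (hO : Cardinal.mk O < τ) (hA : Cardinal.mk A < τ) :
    Cardinal.mk (stepA O A) < τ := by
  have hsO := card_stepO hτ' hO hA
  refine lt_of_le_of_lt ((Cardinal.mk_union_le _ _).trans (add_le_add
    ((Cardinal.mk_union_le _ _).trans (add_le_add
      ((Cardinal.mk_union_le _ _).trans (add_le_add le_rfl Cardinal.mk_image_le))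
      ((Cardinal.mk_union_le _ _).trans (add_le_add
        (Cardinal.mk_image_le.trans (card_cp_le A))
        (Cardinal.mk_image_le.trans (card_prod_set O O))))))
    ((Cardinal.mk_union_le _ _).trans (add_le_add
      (Cardinal.mk_image_le.trans (card_prod_set O O))
      (Cardinal.mk_image_le.trans (card_pp_le A)))))) ?_
  have hOO := Cardinal.mul_lt_of_lt hτ'.le hO hO
  have hAA := Cardinal.mul_lt_of_lt hτ'.le hA hA
  exact Cardinal.add_lt_of_lt hτ'.le
    (Cardinal.add_lt_of_lt hτ'.le
      (Cardinal.add_lt_of_lt hτ'.le hA hsO)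
      (Cardinal.add_lt_of_lt hτ'.le hAA hOO))
    (Cardinal.add_lt_of_lt hτ'.le hOO hAA)

include hτ' in
lemma card_iter {O₀ : Set J} {A₀ : Set (Σ x y : J, x ⟶ y)}
    (hO : Cardinal.mk O₀ < τ) (hA : Cardinal.mk A₀ < τ) (n : ℕ) :
    Cardinal.mk (iter O₀ A₀ n).1 < τ ∧ Cardinal.mk (iter O₀ A₀ n).2 < τ := by
  induction n with
  | zero => exact ⟨hO, hA⟩
  | succ n ih => exact ⟨card_stepO hτ' ih.1 ih.2, card_stepA hτ' ih.1 ih.2⟩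

lemma okpair_iter {O₀ : Set J} {A₀ : Set (Σ x y : J, x ⟶ y)} (h : OKpair O₀ A₀) (n : ℕ) :
    OKpair (iter O₀ A₀ n).1 (iter O₀ A₀ n).2 := by
  induction n with
  | zero => exact h
  | succ n ih => exact okpair_step ih

include hτ hτ' in
lemma card_iUnion_iter {α : Type w} (s : ℕ → Set α) (hs : ∀ n, Cardinal.mk (s n) < τ) :
    Cardinal.mk (⋃ n, s n) < τ := by
  have hre : (⋃ n, s n) = ⋃ m : ULift.{w} ℕ, s m.down := by
    ext x
    simp only [Set.mem_iUnion]
    exact ⟨fun ⟨n, hn⟩ => ⟨⟨n⟩, hn⟩, fun ⟨m, hm⟩ => ⟨m.down, hm⟩⟩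
  rw [hre]
  have hNat : Cardinal.mk (ULift.{w} ℕ) < τ := by
    rw [Cardinal.mk_denumerable]
    exact hτ'
  refine lt_of_le_of_lt (Cardinal.mk_iUnion_le _) ?_
  exact Cardinal.mul_lt_of_lt hτ'.le hNat
    (Cardinal.iSup_lt_of_isRegular hτ hNat (fun m => hs m.down))

/-- Closure of a pair of sets into a `SubCatD`. -/
noncomputable def SubCatD.closure (O₀ : Set J) (A₀ : Set (Σ x y : J, x ⟶ y))
    (hok : OKpair O₀ A₀) (hne : O₀.Nonempty)
    (hO : Cardinal.mk O₀ < τ) (hA : Cardinal.mk A₀ < τ) : SubCatD J τ where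
  O := ⋃ n, (iter O₀ A₀ n).1
  A := ⋃ n, (iter O₀ A₀ n).2
  src_mem e he := by
    obtain ⟨n, hn⟩ := Set.mem_iUnion.mp he
    exact Set.mem_iUnion.mpr ⟨n, (okpair_iter hok n e hn).1⟩
  tgt_mem e he := by
    obtain ⟨n, hn⟩ := Set.mem_iUnion.mp he
    exact Set.mem_iUnion.mpr ⟨n, (okpair_iter hok n e hn).2⟩
  id_mem x hx := by
    obtain ⟨n, hn⟩ := Set.mem_iUnion.mp hx
    refine Set.mem_iUnion.mpr ⟨n + 1, ?_⟩
    exact Or.inl (Or.inl (Or.inr ⟨x, subset_stepO _ _ hn, rfl⟩))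
  comp_mem x y z f g hf hg := by
    obtain ⟨m, hm⟩ := Set.mem_iUnion.mp hf
    obtain ⟨n, hn⟩ := Set.mem_iUnion.mp hg
    have hm' := (iter_mono_n O₀ A₀ (Nat.le_max_left m n)).2 hm
    have hn' := (iter_mono_n O₀ A₀ (Nat.le_max_right m n)).2 hn
    refine Set.mem_iUnion.mpr ⟨max m n + 1, ?_⟩
    exact Or.inl (Or.inr (Or.inl ⟨⟨x, y, z, f, g⟩, ⟨hm', hn'⟩, rfl⟩))
  nonempty := by
    obtain ⟨x, hx⟩ := hne
    exact ⟨x, Set.mem_iUnion.mpr ⟨0, hx⟩⟩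
  sup x hx y hy := by
    obtain ⟨m, hm⟩ := Set.mem_iUnion.mp hx
    obtain ⟨n, hn⟩ := Set.mem_iUnion.mp hy
    have hm' := (iter_mono_n O₀ A₀ (Nat.le_max_left m n)).1 hm
    have hn' := (iter_mono_n O₀ A₀ (Nat.le_max_right m n)).1 hn
    refine ⟨IsFiltered.max x y,
      Set.mem_iUnion.mpr ⟨max m n + 1, Or.inl (Or.inr ⟨(x, y), ⟨hm', hn'⟩, rfl⟩)⟩,
      IsFiltered.leftToMax x y, IsFiltered.rightToMax x y,
      Set.mem_iUnion.mpr ⟨max m n + 1, Or.inl (Or.inr (Or.inr ⟨(x, y), ⟨hm', hn'⟩, rfl⟩))⟩,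
      Set.mem_iUnion.mpr ⟨max m n + 1, Or.inr (Or.inl ⟨(x, y), ⟨hm', hn'⟩, rfl⟩)⟩⟩
  coeq x y f g hf hg := by
    obtain ⟨m, hm⟩ := Set.mem_iUnion.mp hf
    obtain ⟨n, hn⟩ := Set.mem_iUnion.mp hg
    have hm' := (iter_mono_n O₀ A₀ (Nat.le_max_left m n)).2 hm
    have hn' := (iter_mono_n O₀ A₀ (Nat.le_max_right m n)).2 hn
    refine ⟨IsFiltered.coeq f g, IsFiltered.coeqHom f g,
      Set.mem_iUnion.mpr ⟨max m n + 1, Or.inr (Or.inr ⟨⟨x, y, f, g⟩, ⟨hm', hn'⟩, rfl⟩)⟩,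
      IsFiltered.coeq_condition f g⟩
  cardO := card_iUnion_iter hτ hτ' _ (fun n => (card_iter hτ' hO hA n).1)
  cardA := card_iUnion_iter hτ hτ' _ (fun n => (card_iter hτ' hO hA n).2)

lemma SubCatD.subset_closure_O (O₀ : Set J) (A₀ : Set (Σ x y : J, x ⟶ y))
    (hok : OKpair O₀ A₀) (hne : O₀.Nonempty)
    (hO : Cardinal.mk O₀ < τ) (hA : Cardinal.mk A₀ < τ) :
    O₀ ⊆ (SubCatD.closure hτ hτ' O₀ A₀ hok hne hO hA).O :=
  fun x hx => Set.mem_iUnion.mpr ⟨0, hx⟩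

lemma SubCatD.subset_closure_A (O₀ : Set J) (A₀ : Set (Σ x y : J, x ⟶ y))
    (hok : OKpair O₀ A₀) (hne : O₀.Nonempty)
    (hO : Cardinal.mk O₀ < τ) (hA : Cardinal.mk A₀ < τ) :
    A₀ ⊆ (SubCatD.closure hτ hτ' O₀ A₀ hok hne hO hA).A :=
  fun e he => Set.mem_iUnion.mpr ⟨0, he⟩

lemma SubCatD.closure_mono {O₀ O₁ : Set J} {A₀ A₁ : Set (Σ x y : J, x ⟶ y)}
    (hO : O₀ ⊆ O₁) (hA : A₀ ⊆ A₁)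
    {hok₀ : OKpair O₀ A₀} {hne₀ : O₀.Nonempty}
    {hO₀ : Cardinal.mk O₀ < τ} {hA₀ : Cardinal.mk A₀ < τ}
    {hok₁ : OKpair O₁ A₁} {hne₁ : O₁.Nonempty}
    {hO₁ : Cardinal.mk O₁ < τ} {hA₁ : Cardinal.mk A₁ < τ} :
    (SubCatD.closure hτ hτ' O₀ A₀ hok₀ hne₀ hO₀ hA₀).O ⊆
      (SubCatD.closure hτ hτ' O₁ A₁ hok₁ hne₁ hO₁ hA₁).O ∧
    (SubCatD.closure hτ hτ' O₀ A₀ hok₀ hne₀ hO₀ hA₀).A ⊆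
      (SubCatD.closure hτ hτ' O₁ A₁ hok₁ hne₁ hO₁ hA₁).A := by
  constructor
  · intro x hx
    obtain ⟨n, hn⟩ := Set.mem_iUnion.mp hx
    exact Set.mem_iUnion.mpr ⟨n, (iter_mono_sets hO hA n).1 hn⟩
  · intro e he
    obtain ⟨n, hn⟩ := Set.mem_iUnion.mp he
    exact Set.mem_iUnion.mpr ⟨n, (iter_mono_sets hO hA n).2 hn⟩

end SubClosure

section SubCatStruct

variable {J : Type v} [SmallCategory J] [IsFiltered J] {τ : Cardinal.{v}}

/-- The objects of the subcategory described by a `SubCatD`. -/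
def SubCatD.Obj (S : SubCatD J τ) : Type v := {x : J // x ∈ S.O}

attribute [reducible] SubCatD.Obj

instance (S : SubCatD J τ) : SmallCategory S.Obj where
  Hom x y := {f : x.1 ⟶ y.1 // (⟨x.1, y.1, f⟩ : Σ x y : J, x ⟶ y) ∈ S.A}
  id x := ⟨𝟙 x.1, S.id_mem x.1 x.2⟩
  comp f g := ⟨f.1 ≫ g.1, S.comp_mem _ _ _ _ _ f.2 g.2⟩
  id_comp f := by apply Subtype.ext; simp
  comp_id f := by apply Subtype.ext; simp
  assoc f g h := by apply Subtype.ext; simp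

instance (S : SubCatD J τ) : IsFiltered S.Obj := by
  have ne : Nonempty S.Obj := by
    obtain ⟨x, hx⟩ := S.nonempty
    exact ⟨⟨x, hx⟩⟩
  have : IsFilteredOrEmpty S.Obj := by
    constructor
    · rintro ⟨x, hx⟩ ⟨y, hy⟩
      obtain ⟨z, hz, f, g, hf, hg⟩ := S.sup x hx y hy
      exact ⟨⟨z, hz⟩, ⟨f, hf⟩, ⟨g, hg⟩, trivial⟩
    · rintro ⟨x, hx⟩ ⟨y, hy⟩ ⟨f, hf⟩ ⟨g, hg⟩
      obtain ⟨z, h, hz, hcomm⟩ := S.coeq x y f g hf hg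
      exact ⟨⟨z, S.tgt_mem _ hz⟩, ⟨h, hz⟩, Subtype.ext hcomm⟩
  exact ⟨⟩

lemma SubCatD.card_obj (S : SubCatD J τ) : Cardinal.mk S.Obj < τ := S.cardO

lemma SubCatD.card_arrow (S : SubCatD J τ) : Cardinal.mk (Arrow S.Obj) < τ := by
  refine lt_of_le_of_lt (Cardinal.mk_le_of_injective
    (f := fun a : Arrow S.Obj => (⟨⟨a.left.1, a.right.1, a.hom.1⟩, a.hom.2⟩ : S.A)) ?_) S.cardA
  rintro ⟨⟨la, hla⟩, ⟨ra, hra⟩, ⟨fa, hfa⟩⟩ ⟨⟨lb, hlb⟩, ⟨rb, hrb⟩, ⟨fb, hfb⟩⟩ h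
  simp only [Subtype.mk.injEq] at h
  obtain ⟨rfl, rfl, hf⟩ := sig_eq h
  cases eq_of_heq hf
  rfl

instance : Preorder (SubCatD J τ) where
  le S T := S.O ⊆ T.O ∧ S.A ⊆ T.A
  le_refl S := ⟨subset_rfl, subset_rfl⟩
  le_trans S T U h1 h2 := ⟨h1.1.trans h2.1, h1.2.trans h2.2⟩

variable {C : Type u} [Category.{v} C] [HasColimitsOfSize.{v, v} C]

/-- The diagram associated to a `SubCatD`. -/
def SubCatD.diag (S : SubCatD J τ) (F : J ⥤ C) : S.Obj ⥤ C where
  obj x := F.obj x.1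
  map f := F.map f.1
  map_id x := F.map_id x.1
  map_comp f g := F.map_comp f.1 g.1

attribute [reducible] SubCatD.diag

/-- The functor from `SubCatD J τ` to `C` sending `S` to the colimit of its diagram. -/
noncomputable def subColimFunctor (τ : Cardinal.{v}) [IsFiltered J] (F : J ⥤ C) :
    SubCatD J τ ⥤ C where
  obj S := colimit (S.diag F)
  map {S T} h := colimit.desc _
    { pt := colimit (T.diag F)
      ι := {
        app := fun x => colimit.ι (T.diag F) ⟨x.1, (leOfHom h).1 x.2⟩
        naturality := fun x y f => by
          have := colimit.w (T.diag F)
            (j := ⟨y.1, (leOfHom h).1 y.2⟩) (j' := ⟨x.1, (leOfHom h).1 x.2⟩)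
            ⟨f.1, (leOfHom h).2 f.2⟩
          simp only [Functor.const_obj_obj, Functor.const_obj_map, Category.comp_id]
          exact this } }
  map_id S := by
    apply colimit.hom_ext
    intro x
    simp only [colimit.ι_desc, Category.comp_id]
  map_comp {S T U} h1 h2 := by
    apply colimit.hom_ext
    intro x
    simp [colimit.ι_desc]

attribute [reducible] subColimFunctor

lemma ι_subColimFunctor_map {S T : SubCatD J τ} (F : J ⥤ C) (h : S ⟶ T) (x : S.Obj) :
    colimit.ι (S.diag F) x ≫ (subColimFunctor τ F).map h
      = colimit.ι (T.diag F) ⟨x.1, (leOfHom h).1 x.2⟩ :=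
  colimit.ι_desc _ _

/-- The projection from the colimit of a subdiagram to the full colimit. -/
noncomputable def subPi (S : SubCatD J τ) (F : J ⥤ C) : colimit (S.diag F) ⟶ colimit F :=
  colimit.desc _
    { pt := colimit F
      ι := {
        app := fun x => colimit.ι F x.1
        naturality := fun x y f => by
          simp only [Functor.const_obj_obj, Functor.const_obj_map, Category.comp_id]
          exact colimit.w F f.1 } }

lemma ι_subPi (S : SubCatD J τ) (F : J ⥤ C) (x : S.Obj) :
    colimit.ι (S.diag F) x ≫ subPi S F = colimit.ι F x.1 :=
  colimit.ι_desc _ _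

end SubCatStruct

section SubIso

variable {J : Type v} [SmallCategory J] [IsFiltered J] {τ : Cardinal.{v}}
  (hτ : τ.IsRegular) (hτ' : Cardinal.aleph0 < τ)

/-- Closure of a single object. -/
noncomputable def singleSub (j : J) : SubCatD J τ :=
  SubCatD.closure hτ hτ' {j} ∅ (fun e he => absurd he (Set.notMem_empty e))
    ⟨j, rfl⟩
    (by rw [Cardinal.mk_singleton]; exact lt_trans Cardinal.one_lt_aleph0 hτ')
    (by rw [Cardinal.mk_emptyCollection]; exact lt_trans Cardinal.aleph0_pos hτ')

lemma mem_singleSub (j : J) : j ∈ (singleSub hτ hτ' (τ := τ) j).O :=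
  SubCatD.subset_closure_O hτ hτ' _ _ _ _ _ _ rfl

/-- Closure of a single arrow. -/
noncomputable def pairSub {x y : J} (f : x ⟶ y) : SubCatD J τ :=
  SubCatD.closure hτ hτ' {x, y} {⟨x, y, f⟩}
    (by
      rintro e he
      rw [Set.mem_singleton_iff] at he
      subst he
      exact ⟨Or.inl rfl, Or.inr rfl⟩)
    ⟨x, Or.inl rfl⟩
    (by
      refine lt_of_le_of_lt Cardinal.mk_insert_le ?_
      rw [Cardinal.mk_singleton]
      exact Cardinal.add_lt_of_lt hτ'.le (lt_trans Cardinal.one_lt_aleph0 hτ')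
        (lt_trans Cardinal.one_lt_aleph0 hτ'))
    (by rw [Cardinal.mk_singleton]; exact lt_trans Cardinal.one_lt_aleph0 hτ')

lemma singleSub_le_pairSub_left {x y : J} (f : x ⟶ y) :
    (singleSub hτ hτ' (τ := τ) x) ≤ pairSub hτ hτ' f := by
  show (_ : Set J) ⊆ _ ∧ (_ : Set (Σ x y : J, x ⟶ y)) ⊆ _
  exact SubCatD.closure_mono hτ hτ' (O₀ := {x}) (O₁ := {x, y}) (A₀ := ∅)
    (A₁ := {⟨x, y, f⟩})
    (Set.singleton_subset_iff.mpr (Set.mem_insert x {y})) (Set.empty_subset _)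

lemma singleSub_le_pairSub_right {x y : J} (f : x ⟶ y) :
    (singleSub hτ hτ' (τ := τ) y) ≤ pairSub hτ hτ' f := by
  show (_ : Set J) ⊆ _ ∧ (_ : Set (Σ x y : J, x ⟶ y)) ⊆ _
  exact SubCatD.closure_mono hτ hτ' (O₀ := {y}) (O₁ := {x, y}) (A₀ := ∅)
    (A₁ := {⟨x, y, f⟩})
    (Set.singleton_subset_iff.mpr (Set.mem_insert_iff.mpr (Or.inr rfl)))
    (Set.empty_subset _)

lemma arrow_mem_pairSub {x y : J} (f : x ⟶ y) :
    (⟨x, y, f⟩ : Σ x y : J, x ⟶ y) ∈ (pairSub hτ hτ' (τ := τ) f).A :=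
  SubCatD.subset_closure_A hτ hτ' _ _ _ _ _ _ rfl

/-- Closure of a `SubCatD` (its closure as a pair of sets). -/
noncomputable def closSub (S : SubCatD J τ) : SubCatD J τ :=
  SubCatD.closure hτ hτ' S.O S.A (fun e he => ⟨S.src_mem e he, S.tgt_mem e he⟩)
    S.nonempty S.cardO S.cardA

lemma le_closSub (S : SubCatD J τ) : S ≤ closSub hτ hτ' S :=
  ⟨SubCatD.subset_closure_O hτ hτ' _ _ _ _ _ _, SubCatD.subset_closure_A hτ hτ' _ _ _ _ _ _⟩

lemma singleSub_le_closSub {S : SubCatD J τ} {x : J} (hx : x ∈ S.O) :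
    singleSub hτ hτ' (τ := τ) x ≤ closSub hτ hτ' S := by
  show (_ : Set J) ⊆ _ ∧ (_ : Set (Σ x y : J, x ⟶ y)) ⊆ _
  exact SubCatD.closure_mono hτ hτ' (O₀ := {x}) (O₁ := S.O) (A₀ := ∅) (A₁ := S.A)
    (Set.singleton_subset_iff.mpr hx) (Set.empty_subset _)

variable {C : Type u} [Category.{v} C] [HasColimitsOfSize.{v, v} C] (F : J ⥤ C)

/-- The map from the colimit of subdiagram-colimits to the colimit. -/
noncomputable def subU : colimit (subColimFunctor τ F) ⟶ colimit F :=
  colimit.desc _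
    { pt := colimit F
      ι := {
        app := fun S => subPi S F
        naturality := fun S T h => by
          simp only [Functor.const_obj_obj, Functor.const_obj_map, Category.comp_id]
          apply colimit.hom_ext
          intro x
          rw [← Category.assoc, ι_subColimFunctor_map F h x, ι_subPi, ι_subPi] } }

lemma ι_subU (S : SubCatD J τ) : colimit.ι (subColimFunctor τ F) S ≫ subU F = subPi S F :=
  colimit.ι_desc _ _

/-- A leg `F.obj j ⟶ colimit (subColimFunctor τ F)` factoring through `singleSub j`,
rewritten through an arbitrary larger subdiagram. -/
lemma leg_eq_of_le {S T : SubCatD J τ} (h : S ≤ T) (x : S.Obj) :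
    colimit.ι (S.diag F) x ≫ colimit.ι (subColimFunctor τ F) S
      = colimit.ι (T.diag F) ⟨x.1, h.1 x.2⟩ ≫ colimit.ι (subColimFunctor τ F) T := by
  rw [← colimit.w (subColimFunctor τ F) (homOfLE h), ← Category.assoc,
    ι_subColimFunctor_map F (homOfLE h) x]

/-- The map from the colimit to the colimit of subdiagram-colimits. -/
noncomputable def subV : colimit F ⟶ colimit (subColimFunctor τ F) :=
  colimit.desc _
    { pt := colimit (subColimFunctor τ F)
      ι := {
        app := fun j => colimit.ι ((singleSub hτ hτ' (τ := τ) j).diag F)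
            ⟨j, mem_singleSub hτ hτ' j⟩ ≫
          colimit.ι (subColimFunctor τ F) (singleSub hτ hτ' j)
        naturality := fun x y b => by
          simp only [Functor.const_obj_obj, Functor.const_obj_map, Category.comp_id]
          rw [leg_eq_of_le F (singleSub_le_pairSub_left hτ hτ' b) ⟨x, mem_singleSub hτ hτ' x⟩,
            leg_eq_of_le F (singleSub_le_pairSub_right hτ hτ' b) ⟨y, mem_singleSub hτ hτ' y⟩]
          refine (Category.assoc _ _ _).symm.trans
            (congrArg (· ≫ colimit.ι (subColimFunctor τ F) (pairSub hτ hτ' b)) ?_)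
          exact colimit.w ((pairSub hτ hτ' b).diag F)
            (j := ⟨y, (singleSub_le_pairSub_right hτ hτ' b).1 (mem_singleSub hτ hτ' y)⟩)
            (j' := ⟨x, (singleSub_le_pairSub_left hτ hτ' b).1 (mem_singleSub hτ hτ' x)⟩)
            ⟨b, arrow_mem_pairSub hτ hτ' b⟩ } }

lemma ι_subV (j : J) :
    colimit.ι F j ≫ subV hτ hτ' F
      = colimit.ι ((singleSub hτ hτ' (τ := τ) j).diag F) ⟨j, mem_singleSub hτ hτ' j⟩ ≫
          colimit.ι (subColimFunctor τ F) (singleSub hτ hτ' j) :=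
  colimit.ι_desc _ _

lemma subV_subU : subV hτ hτ' F ≫ subU F = 𝟙 (colimit F) := by
  apply colimit.hom_ext
  intro j
  rw [Category.comp_id, ← Category.assoc, ι_subV]
  exact (Category.assoc _ _ _).trans ((congrArg
    (colimit.ι ((singleSub hτ hτ' j).diag F) ⟨j, mem_singleSub hτ hτ' j⟩ ≫ ·)
    (ι_subU F (singleSub hτ hτ' j))).trans (ι_subPi _ F _))

lemma subU_subV : subU F ≫ subV hτ hτ' F = 𝟙 (colimit (subColimFunctor τ F)) := by
  apply colimit.hom_ext
  intro S
  rw [Category.comp_id, ← Category.assoc, ι_subU]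
  apply colimit.hom_ext
  intro x
  rw [← Category.assoc, ι_subPi, ι_subV hτ hτ' F x.1]
  rw [leg_eq_of_le F (singleSub_le_closSub hτ hτ' x.2) ⟨x.1, mem_singleSub hτ hτ' x.1⟩,
    leg_eq_of_le F (le_closSub hτ hτ' S) x]

include hτ hτ' in
lemma isCardFiltered_subCatD : IsCardFiltered (SubCatD J τ) τ := by
  intro A _ G hA _
  obtain ⟨j₀⟩ := IsFiltered.nonempty (C := J)
  set O₀ : Set J := {j₀} ∪ ⋃ a : A, (G.obj a).O with hO₀
  set A₀ : Set (Σ x y : J, x ⟶ y) := ⋃ a : A, (G.obj a).A with hA₀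
  have hok : OKpair O₀ A₀ := by
    rintro e he
    obtain ⟨a, ha⟩ := Set.mem_iUnion.mp he
    exact ⟨Or.inr (Set.mem_iUnion.mpr ⟨a, (G.obj a).src_mem e ha⟩),
      Or.inr (Set.mem_iUnion.mpr ⟨a, (G.obj a).tgt_mem e ha⟩)⟩
  have hcardO : Cardinal.mk O₀ < τ := by
    refine lt_of_le_of_lt (Cardinal.mk_union_le _ _) ?_
    refine Cardinal.add_lt_of_lt hτ'.le
      (by rw [Cardinal.mk_singleton]; exact lt_trans Cardinal.one_lt_aleph0 hτ') ?_
    refine lt_of_le_of_lt (Cardinal.mk_iUnion_le _) ?_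
    exact Cardinal.mul_lt_of_lt hτ'.le hA
      (Cardinal.iSup_lt_of_isRegular hτ hA (fun a => (G.obj a).cardO))
  have hcardA : Cardinal.mk A₀ < τ := by
    refine lt_of_le_of_lt (Cardinal.mk_iUnion_le _) ?_
    exact Cardinal.mul_lt_of_lt hτ'.le hA
      (Cardinal.iSup_lt_of_isRegular hτ hA (fun a => (G.obj a).cardA))
  set T : SubCatD J τ := SubCatD.closure hτ hτ' O₀ A₀ hok ⟨j₀, Or.inl rfl⟩ hcardO hcardA
    with hT
  have hle : ∀ a : A, G.obj a ≤ T := by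
    intro a
    constructor
    · intro x hx
      exact SubCatD.subset_closure_O hτ hτ' _ _ _ _ _ _
        (Or.inr (Set.mem_iUnion.mpr ⟨a, hx⟩))
    · intro e he
      exact SubCatD.subset_closure_A hτ hτ' _ _ _ _ _ _
        (Set.mem_iUnion.mpr ⟨a, he⟩)
  exact ⟨{
    pt := T
    ι := {
      app := fun a => homOfLE (hle a)
      naturality := fun a b f => Subsingleton.elim _ _ } }⟩

end SubIso

/-- In a cocomplete category whose subcategory of compact objects is essentially small and
generates under filtered colimits, for an uncountable regular cardinal `τ`, an object is
`τ`-presentable iff it is a retract of the colimit of a `τ`-small filtered diagram of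
compact objects. -/
theorem stmt3 {C : Type u} [Category.{v} C] [HasColimitsOfSize.{v, v} C]
    (hsmall : EssentiallySmall.{v}
      (ObjectProperty.FullSubcategory (fun X : C => IsCardPresentable Cardinal.aleph0 X)))
    (hgen : ∀ X : C, ∃ D : CompactFilteredDiagram C, Nonempty (colimit D.F ≅ X))
    (τ : Cardinal.{v}) (hτ : τ.IsRegular) (hτ' : Cardinal.aleph0 < τ) (X : C) :
    IsCardPresentable τ X ↔
      ∃ D : CompactFilteredDiagram C,
        Cardinal.mk D.J < τ ∧ Cardinal.mk (Arrow D.J) < τ ∧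
        ∃ (i : X ⟶ colimit D.F) (r : colimit D.F ⟶ X), i ≫ r = 𝟙 X := by
  constructor
  · intro hpres
    obtain ⟨D, ⟨σ⟩⟩ := hgen X
    haveI := D.filtered
    have hcf := isCardFiltered_subCatD (J := D.J) (τ := τ) hτ hτ'
    have hp := hpres (SubCatD D.J τ) hcf
    obtain ⟨S, g, hg⟩ := coyoneda_exists_factor hp
      (colimit.cocone (subColimFunctor τ D.F)) (colimit.isColimit (subColimFunctor τ D.F))
      (σ.inv ≫ subV hτ hτ' D.F)
    let D' : CompactFilteredDiagram C :=
      { J := S.Obj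
        filtered := inferInstance
        F := S.diag D.F
        compact := fun x => D.compact x.1 }
    refine ⟨D', S.card_obj, S.card_arrow, g, subPi S D.F ≫ σ.hom, ?_⟩
    have hg' : g ≫ colimit.ι (subColimFunctor τ D.F) S = σ.inv ≫ subV hτ hτ' D.F := hg
    calc g ≫ subPi S D.F ≫ σ.hom
        = g ≫ (colimit.ι (subColimFunctor τ D.F) S ≫ subU D.F) ≫ σ.hom := by
          rw [ι_subU]
      _ = ((g ≫ colimit.ι (subColimFunctor τ D.F) S) ≫ subU D.F) ≫ σ.hom := by
          simp only [Category.assoc]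
      _ = ((σ.inv ≫ subV hτ hτ' D.F) ≫ subU D.F) ≫ σ.hom := by rw [hg']
      _ = σ.inv ≫ (subV hτ hτ' D.F ≫ subU D.F) ≫ σ.hom := by
          simp only [Category.assoc]
      _ = 𝟙 X := by rw [subV_subU]; simp
  · rintro ⟨D, hJ, hA, i, r, hir⟩
    haveI := D.filtered
    exact isCardPresentable_of_retract hτ hτ' i r hir
      (isCardPresentable_colimit hτ hτ' hJ hA D.F D.compact)
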